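/- Let ρ ≥ 2 and n ≥ 0, let f(n) := 2^{2^n}, and let P_n denote the product of all primes p with p < f(n+2). Every DFA over the alphabet Σ³ representing the set {(a,b,c) ∈ ℤ³ : 0 ≤ a,b,c < P_n and a·b = c} has at least 2^{⌊f(n+1)/(2·log₂ ρ)⌋} states. -/

import Mathlib

namespace Presburger

/-- A letter of the alphabet `Σ^r`, where `Σ = {0, …, ρ-1}`. -/
abbrev Letter (ρ r : ℕ) := Fin r → Fin ρ

/-- The natural number encoded by a word over `Σ` (most significant digit first). -/
def natVal (ρ : ℕ) (w : List ℕ) : ℕ := w.foldl (fun acc b => ρ * acc + b) 0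

/-- The integer encoded by a nonempty word over `Σ` (ρ's complement,
most significant digit first); the empty word gets the junk value `0`. -/
def intVal (ρ : ℕ) : List ℕ → ℤ
  | [] => 0
  | b :: u => (natVal ρ u : ℤ) - (if b = 0 then 0 else (ρ : ℤ) ^ u.length)

/-- The tuple of natural numbers encoded track-wise by a word over `Σ^r` (as integers). -/
def natVec (ρ r : ℕ) (w : List (Letter ρ r)) : Fin r → ℤ :=
  fun i => (natVal ρ (w.map fun b => (b i : ℕ)) : ℤ)

/-- The tuple of integers encoded track-wise by a nonempty word over `Σ^r`. -/
def intVec (ρ r : ℕ) (w : List (Letter ρ r)) : Fin r → ℤ :=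
  fun i => intVal ρ (w.map fun b => (b i : ℕ))

/-- A language over `Σ^r` represents a set `U ⊆ ℤ^r` if it consists exactly of the
nonempty words encoding a member of `U`. -/
def Represents (ρ r : ℕ) (L : Language (Letter ρ r)) (U : Set (Fin r → ℤ)) : Prop :=
  ∀ w : List (Letter ρ r), w ∈ L ↔ (w ≠ [] ∧ intVec ρ r w ∈ U)

/-- A DFA represents `U ⊆ ℤ^r` if its accepted language does. -/
def DFARepresents (ρ r : ℕ) {σ : Type*} (M : DFA (Letter ρ r) σ) (U : Set (Fin r → ℤ)) : Prop :=
  Represents ρ r M.accepts U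

/-- Value of the homogeneous term with coefficients `k` at the point `a`. -/
def tval {r : ℕ} (k : Fin r → ℤ) (a : Fin r → ℤ) : ℤ := ∑ i, k i * a i

/-- A homogeneous term is `0` or has all its coefficients nonzero. -/
def Homog {r : ℕ} (k : Fin r → ℤ) : Prop := k = 0 ∨ ∀ i, k i ≠ 0

/-- `σ(b)`: componentwise `0` if the digit is `0` and `-1` otherwise. -/
def sgnLetter {ρ r : ℕ} (b : Letter ρ r) : Fin r → ℤ :=
  fun i => if (b i : ℕ) = 0 then 0 else -1

/-- The letter `b` viewed as a tuple of integers. -/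
def letterInt {ρ r : ℕ} (b : Letter ρ r) : Fin r → ℤ := fun i => ((b i : ℕ) : ℤ)

/-- `‖t‖⁺`: the sum of the positive coefficients of `t`. -/
def posNorm {r : ℕ} (k : Fin r → ℤ) : ℤ := ∑ i, max (k i) 0

/-- `‖t‖⁻`: the sum of the absolute values of the negative coefficients of `t`. -/
def negNorm {r : ℕ} (k : Fin r → ℤ) : ℤ := ∑ i, max (-k i) 0

/-- `gcd(t)`: the gcd of the absolute values of the coefficients of `t`. -/
def gcdT {r : ℕ} (k : Fin r → ℤ) : ℕ := Finset.univ.gcd fun i => (k i).natAbs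

/-- The transition function `η` of the infinite-state automaton for `t`,
restricted to the integer states: `η(q, b) = ρ·q + t[b]`. -/
def etaStep (ρ : ℕ) {r : ℕ} (k : Fin r → ℤ) (q : ℤ) (b : Letter ρ r) : ℤ :=
  ρ * q + tval k (letterInt b)

/-- The transition of `η` out of the initial state: `η(q_I, b) = t[σ(b)]`. -/
def etaInit (ρ : ℕ) {r : ℕ} (k : Fin r → ℤ) (b : Letter ρ r) : ℤ :=
  tval k (sgnLetter b)

/-- A state `q` is small (for `t ⋈ c`) if `q < min{c, -‖t‖⁺}`. -/
def IsSmall {r : ℕ} (k : Fin r → ℤ) (c q : ℤ) : Prop := q < min c (-posNorm k)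

/-- A state `q` is large (for `t ⋈ c`) if `q > max{c, ‖t‖⁻}`. -/
def IsLarge {r : ℕ} (k : Fin r → ℤ) (c q : ℤ) : Prop := max c (negNorm k) < q

/-- The six relations `=, ≠, <, ≤, >, ≥` on `ℤ`. -/
def rel6 : Set (ℤ → ℤ → Prop) :=
  {fun x y => x = y, fun x y => x ≠ y, fun x y => x < y,
   fun x y => x ≤ y, fun x y => x > y, fun x y => x ≥ y}

/-- Clamp an integer into the state set `{m, …, n}`; yields `none` (the initial state)
only in the degenerate case `m > n`, which never occurs for small `m` and large `n`. -/
noncomputable def clampSt (m n x : ℤ) : Option ↥(Finset.Icc m n) :=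
  if h : max m (min n x) ∈ Finset.Icc m n then some ⟨max m (min n x), h⟩ else none

/-- The DFA `A^{t ⋈ c}_{(m,n)}` for the (in)equation `t ⋈ c`: states are
`q_I = none` together with `{m, …, n}`, transitions clamp `η` to `[m, n]`, and the
accepting states are the integer states `q` with `q ⋈ c`. -/
noncomputable def ineqDFA (ρ : ℕ) {r : ℕ} (k : Fin r → ℤ) (m n : ℤ) (rel : ℤ → ℤ → Prop) (c : ℤ) :
    DFA (Letter ρ r) (Option ↥(Finset.Icc m n)) where
  step q b :=
    match q with
    | none => clampSt m n (etaInit ρ k b)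
    | some z => clampSt m n (etaStep ρ k z.val b)
  start := none
  accept := {q | ∃ z : ↥(Finset.Icc m n), q = some z ∧ rel z.val c}

/-- Two states of a DFA are equivalent if they accept exactly the same words. -/
def stEquiv {α : Type*} {σ : Type*} (M : DFA α σ) (p q : σ) : Prop :=
  ∀ w : List α, (M.evalFrom p w ∈ M.accept ↔ M.evalFrom q w ∈ M.accept)

end Presburger

namespace Presburger

/-- `f(n) = 2^{2^n}`. -/
def ff (n : ℕ) : ℕ := 2 ^ 2 ^ n

/-- `P_n`: the product of all primes `p < f(n+2)`. -/
def Pprod (n : ℕ) : ℕ := ∏ p ∈ Finset.filter Nat.Prime (Finset.range (ff (n + 2))), p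

lemma natVal_foldl (ρ : ℕ) (acc : ℕ) (w : List ℕ) :
    w.foldl (fun acc b => ρ * acc + b) acc = acc * ρ ^ w.length + natVal ρ w := by
  induction w generalizing acc with
  | nil => simp [natVal]
  | cons b w ih =>
      simp only [List.foldl_cons, List.length_cons, natVal]
      rw [ih (ρ * acc + b), ih (ρ * 0 + b)]
      ring

lemma natVal_append (ρ : ℕ) (u v : List ℕ) :
    natVal ρ (u ++ v) = natVal ρ u * ρ ^ v.length + natVal ρ v := by
  unfold natVal
  rw [List.foldl_append, natVal_foldl]
  rfl

lemma natVal_cons_zero (ρ : ℕ) (w : List ℕ) : natVal ρ (0 :: w) = natVal ρ w := by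
  simp [natVal]

def mkLetter (ρ : ℕ) (hρ : 0 < ρ) (a b c : ℕ) : Letter ρ 3 :=
  fun i => ⟨![a, b, c] i % ρ, Nat.mod_lt _ hρ⟩

def word3 (ρ : ℕ) (hρ : 0 < ρ) : ℕ → ℕ → ℕ → ℕ → List (Letter ρ 3)
  | 0, _, _, _ => []
  | t + 1, a, b, c => word3 ρ hρ t (a / ρ) (b / ρ) (c / ρ) ++ [mkLetter ρ hρ a b c]

lemma word3_length (ρ : ℕ) (hρ : 0 < ρ) (t a b c : ℕ) :
    (word3 ρ hρ t a b c).length = t := by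
  induction t generalizing a b c with
  | zero => rfl
  | succ t ih => simp [word3, ih]

lemma natVal_word3 (ρ : ℕ) (hρ : 0 < ρ) (t a b c : ℕ) (i : Fin 3)
    (h : ![a, b, c] i < ρ ^ t) :
    natVal ρ ((word3 ρ hρ t a b c).map fun L => (L i : ℕ)) = ![a, b, c] i := by
  induction t generalizing a b c with
  | zero => simpa [word3, natVal] using (Nat.lt_one_iff.mp (by simpa using h)).symm
  | succ t ih =>
      have hdiv : ![a / ρ, b / ρ, c / ρ] i = ![a, b, c] i / ρ := by
        fin_cases i <;> simp
      have hlt : ![a / ρ, b / ρ, c / ρ] i < ρ ^ t := by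
        rw [hdiv, Nat.div_lt_iff_lt_mul hρ]
        calc ![a, b, c] i < ρ ^ (t + 1) := h
        _ = ρ ^ t * ρ := by ring
      simp only [word3, List.map_append, natVal_append]
      rw [ih (a / ρ) (b / ρ) (c / ρ) hlt, hdiv]
      have h1 : natVal ρ [((mkLetter ρ hρ a b c) i : ℕ)] = ![a, b, c] i % ρ := by
        simp [natVal, mkLetter]
      simp only [List.map_cons, List.map_nil, List.length_cons, List.length_nil, h1, pow_one]
      rw [zero_add, pow_one]; exact Nat.div_add_mod' _ ρ

def pref (ρ : ℕ) (hρ : 0 < ρ) (s a : ℕ) : List (Letter ρ 3) :=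
  mkLetter ρ hρ 0 0 0 :: word3 ρ hρ s 0 0 a

def suff (ρ : ℕ) (hρ : 0 < ρ) (s b : ℕ) : List (Letter ρ 3) :=
  word3 ρ hρ (s + 1) (b * ρ) (ρ ^ s) 0

lemma intVec_pref_suff (ρ : ℕ) (hρ : 0 < ρ) (hρ1 : 1 < ρ) (s a b : ℕ)
    (ha : a < ρ ^ s) (hb : b < ρ ^ s) (i : Fin 3) :
    intVec ρ 3 (pref ρ hρ s a ++ suff ρ hρ s b) i
      = ((![b * ρ, ρ ^ s, a * ρ ^ (s + 1)] i : ℕ) : ℤ) := by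
  have hz : ((mkLetter ρ hρ 0 0 0) i : ℕ) = 0 := by
    fin_cases i <;> simp [mkLetter]
  have h1 : natVal ρ ((word3 ρ hρ s 0 0 a).map fun L => (L i : ℕ)) = ![0, 0, a] i := by
    apply natVal_word3
    fin_cases i <;> simp <;> first | exact ha | exact pow_pos hρ s
  have h2 : natVal ρ ((word3 ρ hρ (s + 1) (b * ρ) (ρ ^ s) 0).map fun L => (L i : ℕ))
      = ![b * ρ, ρ ^ s, 0] i := by
    apply natVal_word3
    have hbρ : b * ρ < ρ ^ (s + 1) := by
      rw [pow_succ]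
      exact Nat.mul_lt_mul_of_lt_of_le hb le_rfl hρ
    have hρs : ρ ^ s < ρ ^ (s + 1) := Nat.pow_lt_pow_right hρ1 (Nat.lt_succ_self s)
    fin_cases i <;> simp <;>
      first | exact hbρ | exact hρs | exact pow_pos hρ (s + 1)
  have hlen : ((word3 ρ hρ (s + 1) (b * ρ) (ρ ^ s) 0).map fun L => (L i : ℕ)).length = s + 1 := by
    rw [List.length_map, word3_length]
  simp only [intVec, pref, suff, List.cons_append, List.map_cons, List.map_append, hz, intVal,
    if_pos rfl, natVal_append, h1, h2, hlen, sub_zero]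
  fin_cases i <;> simp <;> push_cast <;> ring

lemma card_lb (ρ : ℕ) (hρ2 : 2 ≤ ρ) (P s : ℕ) {σ : Type*} [Fintype σ]
    (M : DFA (Letter ρ 3) σ)
    (hM : DFARepresents ρ 3 M
      {a | (0 ≤ a 0 ∧ a 0 < (P : ℤ)) ∧ (0 ≤ a 1 ∧ a 1 < (P : ℤ)) ∧
           (0 ≤ a 2 ∧ a 2 < (P : ℤ)) ∧ a 0 * a 1 = a 2})
    (hP : ρ ^ (2 * s + 1) ≤ P) : ρ ^ s ≤ Fintype.card σ := by
  have hρ : 0 < ρ := by omega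
  have hρ1 : 1 < ρ := by omega
  have key : ∀ a b : Fin (ρ ^ s),
      (pref ρ hρ s a ++ suff ρ hρ s b ∈ M.accepts ↔ (a : ℕ) = (b : ℕ)) := by
    intro a b
    rw [hM]
    have hIV := intVec_pref_suff ρ hρ hρ1 s a b a.isLt b.isLt
    have e0 := hIV 0; have e1 := hIV 1; have e2 := hIV 2
    simp only [Matrix.cons_val_zero, Matrix.cons_val_one, Matrix.head_cons,
      Matrix.cons_val_two, Matrix.tail_cons] at e0 e1 e2
    have hne : pref ρ hρ s a ++ suff ρ hρ s b ≠ [] := by simp [pref]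
    have hb1 : (b : ℕ) * ρ < ρ ^ (2 * s + 1) := by
      calc (b : ℕ) * ρ < ρ ^ s * ρ := Nat.mul_lt_mul_of_lt_of_le b.isLt le_rfl hρ
      _ = ρ ^ (s + 1) := (pow_succ ρ s).symm
      _ ≤ ρ ^ (2 * s + 1) := Nat.pow_le_pow_right hρ (by omega)
    have hb2 : ρ ^ s < ρ ^ (2 * s + 1) := Nat.pow_lt_pow_right hρ1 (by omega)
    have hb3 : (a : ℕ) * ρ ^ (s + 1) < ρ ^ (2 * s + 1) := by
      calc (a : ℕ) * ρ ^ (s + 1) < ρ ^ s * ρ ^ (s + 1) :=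
        Nat.mul_lt_mul_of_lt_of_le a.isLt le_rfl (pow_pos hρ _)
      _ = ρ ^ (2 * s + 1) := by rw [← pow_add]; ring_nf
    constructor
    · rintro ⟨-, h0, h1, h2, heq⟩
      rw [e0, e1, e2] at heq
      have : (b : ℕ) * ρ * ρ ^ s = (a : ℕ) * ρ ^ (s + 1) := by exact_mod_cast heq
      have h' : (b : ℕ) * ρ ^ (s + 1) = (a : ℕ) * ρ ^ (s + 1) := by
        rw [← this, pow_succ]; ring
      have := Nat.eq_of_mul_eq_mul_right (pow_pos hρ (s + 1)) h'
      omega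
    · intro hab
      refine ⟨hne, ⟨?_, ?_⟩, ⟨?_, ?_⟩, ⟨?_, ?_⟩, ?_⟩
      · rw [e0]; positivity
      · rw [e0]; exact_mod_cast lt_of_lt_of_le hb1 hP
      · rw [e1]; positivity
      · rw [e1]; exact_mod_cast lt_of_lt_of_le hb2 hP
      · rw [e2]; positivity
      · rw [e2]; exact_mod_cast lt_of_lt_of_le hb3 hP
      · rw [e0, e1, e2, hab]
        push_cast [pow_succ]; ring
  have inj : Function.Injective fun a : Fin (ρ ^ s) => M.evalFrom M.start (pref ρ hρ s a) := by
    intro a b hab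
    simp only at hab
    have h1 : pref ρ hρ s (a : ℕ) ++ suff ρ hρ s (a : ℕ) ∈ M.accepts := (key a a).mpr rfl
    have hacc : ∀ w : List (Letter ρ 3), w ∈ M.accepts ↔ M.evalFrom M.start w ∈ M.accept :=
      fun w => Iff.rfl
    rw [hacc, DFA.evalFrom_of_append, hab, ← DFA.evalFrom_of_append, ← hacc] at h1
    exact Fin.ext ((key b a).mp h1).symm
  simpa using Fintype.card_le_of_injective _ inj


open Nat Finset in
lemma cheb (N : ℕ) (hN : 0 < N) :
    4 ^ N ≤ 2 * N *
      ((2 * N) ^ Nat.sqrt (2 * N) * ∏ p ∈ Finset.filter Nat.Prime (Finset.range (2 * N + 1)), p) := by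
  have h1 : 4 ^ N ≤ 2 * N * centralBinom N := Nat.four_pow_le_two_mul_self_mul_centralBinom N hN
  refine h1.trans (Nat.mul_le_mul_left _ ?_)
  have n2_pos : 0 < 2 * N := by omega
  set S := (Finset.range (2 * N + 1)).filter Nat.Prime with hS
  set f : ℕ → ℕ := fun x => x ^ (centralBinom N).factorization x with hf
  have hprod : ∏ x ∈ S, f x = ∏ x ∈ Finset.range (2 * N + 1), f x := by
    refine Finset.prod_filter_of_ne fun p _ h => ?_
    contrapose! h; dsimp only [f]
    rw [Nat.factorization_eq_zero_of_not_prime N.centralBinom h, _root_.pow_zero]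
  calc centralBinom N = ∏ x ∈ S, f x := by
        rw [hprod, Nat.prod_pow_factorization_centralBinom]
  _ = (∏ x ∈ S.filter fun p => p ≤ Nat.sqrt (2 * N), f x) *
        ∏ x ∈ S.filter fun p => ¬p ≤ Nat.sqrt (2 * N), f x :=
      (Finset.prod_filter_mul_prod_filter_not S _ _).symm
  _ ≤ (2 * N) ^ Nat.sqrt (2 * N) * ∏ p ∈ S, p := by
      apply Nat.mul_le_mul
      · refine (Finset.prod_le_prod' fun p _ => (?_ : f p ≤ 2 * N)).trans ?_
        · exact Nat.pow_factorization_choose_le n2_pos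
        have hcard : (Finset.Icc 1 (Nat.sqrt (2 * N))).card = Nat.sqrt (2 * N) := by
          rw [Nat.card_Icc, Nat.add_sub_cancel]
        rw [Finset.prod_const]
        refine pow_right_mono₀ (by omega) ((Finset.card_le_card fun x hx => ?_).trans hcard.le)
        obtain ⟨h1', h2'⟩ := Finset.mem_filter.1 hx
        exact Finset.mem_Icc.mpr ⟨(Finset.mem_filter.1 h1').2.one_lt.le.trans' (by omega), h2'⟩
      · refine (Finset.prod_le_prod' fun p hp => (?_ : f p ≤ p)).trans ?_
        · obtain ⟨h1', h2'⟩ := Finset.mem_filter.1 hp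
          refine (pow_right_mono₀ (Finset.mem_filter.1 h1').2.one_lt.le ?_).trans (pow_one p).le
          exact Nat.factorization_choose_le_one (Nat.sqrt_lt'.mp <| not_le.1 h2')
        exact Finset.prod_le_prod_of_subset_of_one_le' (Finset.filter_subset _ _)
          fun p hp _ => (Finset.mem_filter.1 hp).2.one_lt.le

lemma aux_exp (j : ℕ) : j + 4 ≤ 2 ^ (j + 2) := by
  induction j with
  | zero => norm_num
  | succ j ih =>
      calc j + 1 + 4 ≤ (j + 4) + 1 := by omega
      _ ≤ 2 ^ (j + 2) + 2 ^ (j + 2) := by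
          have := Nat.one_le_two_pow (n := j + 2); omega
      _ = 2 ^ (j + 1 + 2) := by
          rw [← two_mul, ← pow_succ']

lemma core (k : ℕ) (hk3 : 3 ≤ k) :
    2 ^ (2 * 2 ^ 2 ^ (k - 1)) ≤
      ∏ p ∈ Finset.filter Nat.Prime (Finset.range (2 ^ 2 ^ k)), p := by
  obtain ⟨h, hh⟩ : ∃ h, 2 ^ 2 ^ (k - 1) = h := ⟨_, rfl⟩
  obtain ⟨q, hq⟩ : ∃ q, 2 ^ k = q := ⟨_, rfl⟩
  rw [hh, hq]
  have hq8 : 8 ≤ q := by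
    rw [← hq]
    calc (8:ℕ) = 2 ^ 3 := by norm_num
    _ ≤ 2 ^ k := Nat.pow_le_pow_right (by norm_num) hk3
  have hq4 : q + 4 ≤ h := by
    obtain ⟨j, rfl⟩ : ∃ j, k = j + 3 := ⟨k - 3, by omega⟩
    have hed : j + 3 - 1 = j + 2 := by omega
    rw [← hh, ← hq, hed]
    have h2 : 2 ^ (j + 3) + 4 ≤ 2 ^ (j + 3 + 1) := by
      have h4 : 4 ≤ 2 ^ (j + 3) := by
        calc (4:ℕ) = 2 ^ 2 := by norm_num
        _ ≤ 2 ^ (j + 3) := Nat.pow_le_pow_right (by norm_num) (by omega)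
      calc 2 ^ (j + 3) + 4 ≤ 2 ^ (j + 3) + 2 ^ (j + 3) := Nat.add_le_add_left h4 _
      _ = 2 ^ (j + 3 + 1) := by rw [← two_mul, ← pow_succ']
    calc 2 ^ (j + 3) + 4 ≤ 2 ^ (j + 3 + 1) := h2
    _ ≤ 2 ^ 2 ^ (j + 2) := Nat.pow_le_pow_right (by norm_num) (aux_exp j)
  have hh16 : 12 ≤ h := by omega
  have hx : 2 ^ q = h * h := by
    rw [← hq, ← hh, ← pow_add, ← two_mul]
    congr 1
    rw [← pow_succ']
    congr 1
    omega
  have hq1 : 1 ≤ q := by omega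
  obtain ⟨N, hNd⟩ : ∃ N, 2 ^ (q - 1) - 1 = N := ⟨_, rfl⟩
  have h2q : (2:ℕ) * 2 ^ (q - 1) = 2 ^ q := by
    rw [← pow_succ']
    congr 1
    omega
  have hpow1 : 1 ≤ 2 ^ (q - 1) := Nat.one_le_two_pow
  have h2N : 2 * N = h * h - 2 := by rw [← hNd, ← hx, ← h2q]; omega
  have hhh : 4 ≤ h * h := by nlinarith
  have hNpos : 0 < N := by
    have : 4 ≤ 2 ^ (q - 1) := by
      calc (4:ℕ) = 2 ^ 2 := by norm_num
      _ ≤ 2 ^ (q - 1) := Nat.pow_le_pow_right (by norm_num) (by omega)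
    omega
  have hcheb := cheb N hNpos
  have hsub : ∏ p ∈ Finset.filter Nat.Prime (Finset.range (2 * N + 1)), p ≤
      ∏ p ∈ Finset.filter Nat.Prime (Finset.range (2 ^ q)), p := by
    apply Finset.prod_le_prod_of_subset_of_one_le'
    · apply Finset.filter_subset_filter
      apply Finset.range_subset_range.2
      rw [hx]
      omega
    · intro p hp _
      exact (Finset.mem_filter.1 hp).2.one_lt.le
  have hApos : 0 < 2 * N * (2 * N) ^ Nat.sqrt (2 * N) := by positivity
  have main : 4 ^ N ≤ 2 * N * (2 * N) ^ Nat.sqrt (2 * N) *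
      ∏ p ∈ Finset.filter Nat.Prime (Finset.range (2 ^ q)), p := by
    calc 4 ^ N ≤ 2 * N * ((2 * N) ^ Nat.sqrt (2 * N) *
        ∏ p ∈ Finset.filter Nat.Prime (Finset.range (2 * N + 1)), p) := hcheb
    _ = 2 * N * (2 * N) ^ Nat.sqrt (2 * N) *
        ∏ p ∈ Finset.filter Nat.Prime (Finset.range (2 * N + 1)), p := by ring
    _ ≤ _ := Nat.mul_le_mul_left _ hsub
  have hnum : 2 * N * (2 * N) ^ Nat.sqrt (2 * N) * 2 ^ (2 * h) ≤ 4 ^ N := by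
    have hsqrt : Nat.sqrt (2 * N) ≤ h := by
      have h5 : 2 * N ≤ h * h := by omega
      calc Nat.sqrt (2 * N) ≤ Nat.sqrt (h * h) := Nat.sqrt_le_sqrt h5
      _ = h := Nat.sqrt_eq h
    have h2Nle : 2 * N ≤ 2 ^ q := by rw [hx]; omega
    have hAle : 2 * N * (2 * N) ^ Nat.sqrt (2 * N) ≤ 2 ^ (q + q * h) := by
      rw [pow_add]
      apply Nat.mul_le_mul h2Nle
      calc (2 * N) ^ Nat.sqrt (2 * N) ≤ (2 ^ q) ^ Nat.sqrt (2 * N) :=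
            Nat.pow_le_pow_left h2Nle _
      _ ≤ (2 ^ q) ^ h := Nat.pow_le_pow_right (pow_pos (by norm_num) _) hsqrt
      _ = 2 ^ (q * h) := by rw [← pow_mul]
    have hfour : (4:ℕ) ^ N = 2 ^ (h * h - 2) := by
      have h4 : (4:ℕ) = 2 ^ 2 := by norm_num
      rw [h4, ← pow_mul, ← h2N]
    rw [hfour]
    calc 2 * N * (2 * N) ^ Nat.sqrt (2 * N) * 2 ^ (2 * h)
        ≤ 2 ^ (q + q * h) * 2 ^ (2 * h) := Nat.mul_le_mul_right _ hAle
    _ = 2 ^ (q + q * h + 2 * h) := by rw [← pow_add]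
    _ ≤ 2 ^ (h * h - 2) := by
        apply Nat.pow_le_pow_right (by norm_num)
        have hint : (q + 4) * h ≤ h * h := Nat.mul_le_mul_right h hq4
        have : q + q * h + 2 * h + 2 ≤ h * h := by nlinarith
        omega
  have hfin := le_trans hnum main
  rw [mul_comm (2 * N * (2 * N) ^ Nat.sqrt (2 * N)) (2 ^ (2 * h))] at hfin
  rw [mul_comm (2 * N * (2 * N) ^ Nat.sqrt (2 * N)) _] at hfin
  exact Nat.le_of_mul_le_mul_right (by omega) hApos

lemma Pprod_lb (n : ℕ) : 2 ^ (2 * ff (n + 1)) ≤ Pprod n := by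
  rcases Nat.eq_zero_or_pos n with rfl | hn
  · have h0 : Pprod 0 = 30030 := by decide
    rw [h0]; norm_num [ff]
  have h1 := core (n + 2) (by omega)
  have e1 : n + 2 - 1 = n + 1 := by omega
  rw [e1] at h1
  exact h1


lemma pow_le_two_pow_of_logb (ρ m F : ℕ) (hρ : 2 ≤ ρ)
    (h : (m : ℝ) * Real.logb 2 ρ ≤ (F : ℝ)) : ρ ^ m ≤ 2 ^ F := by
  have hρ1 : (1:ℝ) < (ρ:ℝ) := by exact_mod_cast (by omega : 1 < ρ)
  have hρ0 : (0:ℝ) < (ρ:ℝ) := by linarith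
  have hreal : ((ρ:ℝ)) ^ m ≤ (2:ℝ) ^ F := by
    have h2 : (2:ℝ) ^ Real.logb 2 (ρ:ℝ) = (ρ:ℝ) :=
      Real.rpow_logb (by norm_num) (by norm_num) hρ0
    have e1 : ((ρ:ℝ)) ^ m = (2:ℝ) ^ ((m : ℝ) * Real.logb 2 ρ) := by
      calc ((ρ:ℝ)) ^ m = ((2:ℝ) ^ Real.logb 2 (ρ:ℝ)) ^ m := by rw [h2]
      _ = (2:ℝ) ^ (Real.logb 2 (ρ:ℝ) * (m:ℝ)) := by
          rw [← Real.rpow_natCast ((2:ℝ) ^ Real.logb 2 (ρ:ℝ)) m,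
            ← Real.rpow_mul (by norm_num)]
      _ = (2:ℝ) ^ ((m:ℝ) * Real.logb 2 (ρ:ℝ)) := by rw [mul_comm]
    rw [e1, ← Real.rpow_natCast (2:ℝ) F]
    exact Real.rpow_le_rpow_of_exponent_le one_le_two h
  exact_mod_cast hreal

/-- Theorem `worst_case`.
Every DFA over the alphabet `Σ³` representing
`{(a,b,c) ∈ ℤ³ : 0 ≤ a,b,c < P_n, a·b = c}` (the set `⟦Prod_n⟧` defined by the
Fischer–Rabin formulas) has at least `2^{⌊f(n+1)/(2·log₂ ρ)⌋}` states. -/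
theorem stmt_18 (ρ : ℕ) (hρ : 2 ≤ ρ) (n : ℕ)
    (σ : Type*) [Fintype σ] (M : DFA (Letter ρ 3) σ)
    (hM : DFARepresents ρ 3 M
      {a | (0 ≤ a 0 ∧ a 0 < (Pprod n : ℤ)) ∧ (0 ≤ a 1 ∧ a 1 < (Pprod n : ℤ)) ∧
           (0 ≤ a 2 ∧ a 2 < (Pprod n : ℤ)) ∧ a 0 * a 1 = a 2}) :
    2 ^ (⌊(ff (n + 1) : ℝ) / (2 * Real.logb 2 ρ)⌋).toNat ≤ Fintype.card σ := by
  have hstart : Nonempty σ := ⟨M.start⟩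
  set s := (⌊(ff (n + 1) : ℝ) / (2 * Real.logb 2 ρ)⌋).toNat with hs
  rcases Nat.eq_zero_or_pos s with h0 | h1
  · rw [h0]
    exact Fintype.card_pos
  · have hρ1 : (1:ℝ) < (ρ:ℝ) := by exact_mod_cast (by omega : 1 < ρ)
    have hlog1 : 1 ≤ Real.logb 2 ρ := by
      rw [show (1:ℝ) = Real.logb 2 2 by simp]
      exact Real.logb_le_logb_of_le (by norm_num) (by norm_num) (by exact_mod_cast hρ)
    have hD : (0:ℝ) < 2 * Real.logb 2 ρ := by linarith
    have hfloor : (s : ℝ) ≤ (ff (n + 1) : ℝ) / (2 * Real.logb 2 ρ) := by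
      rw [hs]
      have hnn : 0 ≤ ⌊(ff (n + 1) : ℝ) / (2 * Real.logb 2 ρ)⌋ := by
        apply Int.floor_nonneg.mpr
        positivity
      have h3 : (((⌊(ff (n + 1) : ℝ) / (2 * Real.logb 2 ρ)⌋).toNat : ℕ) : ℤ)
          = ⌊(ff (n + 1) : ℝ) / (2 * Real.logb 2 ρ)⌋ := Int.toNat_of_nonneg hnn
      have h4 := Int.floor_le ((ff (n + 1) : ℝ) / (2 * Real.logb 2 ρ))
      rw [← h3] at h4
      exact_mod_cast h4
    have hsD : (s : ℝ) * (2 * Real.logb 2 ρ) ≤ (ff (n + 1) : ℝ) :=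
      (le_div_iff₀ hD).mp hfloor
    have hs1 : (1:ℝ) ≤ (s:ℝ) := by exact_mod_cast h1
    have hmul : ((2 * s + 1 : ℕ) : ℝ) * Real.logb 2 ρ ≤ ((2 * ff (n + 1) : ℕ) : ℝ) := by
      push_cast
      nlinarith [hs1, hlog1, hsD]
    have hP : ρ ^ (2 * s + 1) ≤ Pprod n :=
      (pow_le_two_pow_of_logb ρ (2 * s + 1) (2 * ff (n + 1)) hρ hmul).trans (Pprod_lb n)
    calc 2 ^ s ≤ ρ ^ s := Nat.pow_le_pow_left hρ s
    _ ≤ Fintype.card σ := card_lb ρ hρ (Pprod n) s M hM hP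

end Presburger
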